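/- arXiv:2407.03461 — 2 statements merged into one kernel-verified Lean document; each statement's English description precedes it below -/
import Mathlib

section
/- Let C_f ∈ K(n, m) be a plane branch with gcd(n, m) = 1, finite Zariski invariant λ_f, given in coordinates such that its Puiseux parametrization is (t^n, t^m + b t^{λ_f} + Σ_{i>λ_f} b_i t^i) with b ≠ 0 and λ_f + n ∉ ⟨n, m⟩, and let f ∈ ℂ{x}[y] be its Weierstrass polynomial. Then there exist p, q ∈ ℕ with 0 ≤ q < n and p·n + q·m = (n − 1)m + λ_f, a unique nonzero c ∈ ℂ, and coefficients a_{ij} ∈ ℂ such that f = y^n − x^m + c·x^p y^q + Σ_{i·n + j·m > p·n + q·m, j < n} a_{ij} x^i y^j. -/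
open scoped Classical

noncomputable section

/-- A plane branch `C_f`, encoded by a primitive Puiseux parametrization
`(t^n, Σ_{i>n} (a i) t^i)` which is transversal to `{x = 0}`. -/
structure Branch where
  /-- the multiplicity `n = mult(C_f)` -/
  n : ℕ
  npos : 0 < n
  /-- the coefficients of the Puiseux parametrization -/
  a : ℕ → ℂ
  /-- transversality of `{x = 0}`: the `y`-component has order `> n` -/
  lowZero : ∀ i ≤ n, a i = 0
  /-- the parametrization is primitive -/
  primitive : ∀ d : ℕ, d ∣ n → (∀ i, a i ≠ 0 → d ∣ i) → d = 1

namespace Branch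

/-- The `x`-component `t^n` of the parametrization. -/
def paramX (F : Branch) : PowerSeries ℂ := PowerSeries.X ^ F.n

/-- The `y`-component `Σ_{i>n} (a i) t^i` of the parametrization. -/
def paramY (F : Branch) : PowerSeries ℂ := PowerSeries.mk F.a

/-- The pair `(β_j, e_j)` of the characteristic sequence and the gcd sequence:
`β_0 = e_0 = n`, `β_{j+1} = min { i | a i ≠ 0 ∧ e_j ∤ i }`, `e_{j+1} = gcd (e_j, β_{j+1})`. -/
def charData (F : Branch) : ℕ → ℕ × ℕ
  | 0 => (F.n, F.n)
  | j + 1 =>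
      let b := sInf {i | F.a i ≠ 0 ∧ ¬ (F.charData j).2 ∣ i}
      (b, Nat.gcd (F.charData j).2 b)

/-- The characteristic sequence `β_j`; `β_0 = n`, `β_1 = m`. -/
def beta (F : Branch) (j : ℕ) : ℕ := (F.charData j).1

/-- The gcd sequence `e_j = gcd(β_0, …, β_j)`. -/
def e (F : Branch) (j : ℕ) : ℕ := (F.charData j).2

/-- The genus `g`: the first index with `e_g = 1`. -/
def genus (F : Branch) : ℕ := sInf {g | F.e g = 1}

/-- The minimal system of generators `v_0 < v_1 < ⋯ < v_g` of the value semigroup: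
`v_0 = n`, `v_1 = β_1`, `v_j = (e_{j-2}/e_{j-1}) v_{j-1} + β_j - β_{j-1}`. -/
def v (F : Branch) : ℕ → ℕ
  | 0 => F.n
  | 1 => F.beta 1
  | j + 2 => F.e j / F.e (j + 1) * F.v (j + 1) + F.beta (j + 2) - F.beta (j + 1)

/-- The coefficient at the rational exponent `q` of the Newton–Puiseux root indexed by `j`,
namely of `α_j(x) = Σ_i (a i) ε^{ij} x^{i/n}` with `ε = exp(2πI/n)`. -/
def rootCoeff (F : Branch) (j : ℕ) (q : ℚ) : ℂ :=
  if h : ∃ i : ℕ, (i : ℚ) = q * F.n then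
    F.a h.choose * Complex.exp (2 * Real.pi * Complex.I * j * h.choose / F.n)
  else 0

/-- The order `mult(α_j - δ_l)` of the difference of the `j`-th Newton–Puiseux root of `F`
and the `l`-th root of `G` (a rational number, `⊤` if the roots coincide). -/
def rootDiffOrder (F G : Branch) (j l : ℕ) : WithTop ℚ :=
  if h : ∃ k : ℕ, F.rootCoeff j ((k : ℚ) / (F.n * G.n)) ≠ G.rootCoeff l ((k : ℚ) / (F.n * G.n))
  then (((Nat.find h : ℚ) / (F.n * G.n) : ℚ) : WithTop ℚ)
  else ⊤

/-- The contact order `cont(C_F, C_G) = max_{j,l} mult(α_j - δ_l)` of two branches. -/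
def contact (F G : Branch) : WithTop ℚ :=
  haveI : Nonempty (Fin F.n × Fin G.n) := ⟨⟨0, F.npos⟩, ⟨0, G.npos⟩⟩
  Finset.sup' Finset.univ Finset.univ_nonempty fun p : Fin F.n × Fin G.n =>
    F.rootDiffOrder G p.1 p.2

/-- The intersection multiplicity `I(C_F, C_G) = dim_ℂ ℂ{x,y}/⟨f,g⟩`, computed as
`Σ_{j,l} mult(α_j - δ_l)` over all pairs of Newton–Puiseux roots. -/
def inter (F G : Branch) : WithTop ℚ :=
  ∑ p : Fin F.n × Fin G.n, F.rootDiffOrder G p.1 p.2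

/-- Pullback of a plane curve (here, with polynomial equation `h`) under the
parametrization of `F`: `h(t^n, Σ a_i t^i)`. -/
def pullbackPoly (F : Branch) (h : MvPolynomial (Fin 2) ℂ) : PowerSeries ℂ :=
  MvPolynomial.aeval ![F.paramX, F.paramY] h

/-- The value semigroup `Γ_F = { I(f,h) | f ∤ h }`, realized as the set of `t`-orders of the
nonzero pullbacks `h(t^n, Σ a_i t^i)`. -/
def gamma (F : Branch) : Set ℕ :=
  {d | ∃ h : MvPolynomial (Fin 2) ℂ, F.pullbackPoly h ≠ 0 ∧ (F.pullbackPoly h).order = (d : ℕ∞)}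

end Branch

/-- Substitution `φ(ρ(t))` of a power series `ρ` (with `ρ(0) = 0`) into a one-variable power
series `φ`. -/
def substt (ρ φ : PowerSeries ℂ) : PowerSeries ℂ :=
  PowerSeries.mk fun k =>
    ∑ i ∈ Finset.range (k + 1), PowerSeries.coeff i φ * PowerSeries.coeff k (ρ ^ i)

/-- Substitution `σ(u(t), v(t))` of two one-variable power series `u, v` (with
`u(0) = v(0) = 0`) into a two-variable power series `σ`. -/
def subst2 (u v : PowerSeries ℂ) (σ : MvPowerSeries (Fin 2) ℂ) : PowerSeries ℂ :=
  PowerSeries.mk fun k =>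
    ∑ p ∈ Finset.range (k + 1) ×ˢ Finset.range (k + 1),
      MvPowerSeries.coeff (Finsupp.single 0 p.1 + Finsupp.single 1 p.2) σ *
        PowerSeries.coeff k (u ^ p.1 * v ^ p.2)

namespace Branch

/-- Analytic equivalence of plane branches: there are a (formal) change of coordinates
`σ = (σ₁, σ₂)` of `(ℂ², 0)` (zero constant terms, invertible Jacobian at `0`) and a change of
parameter `ρ` (with `ord ρ = 1`) such that `σ ∘ φ_F ∘ ρ = φ_G`. -/
def AEquiv (F G : Branch) : Prop :=
  ∃ σ₁ σ₂ : MvPowerSeries (Fin 2) ℂ, ∃ ρ : PowerSeries ℂ,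
    MvPowerSeries.constantCoeff σ₁ = 0 ∧
    MvPowerSeries.constantCoeff σ₂ = 0 ∧
    MvPowerSeries.coeff (Finsupp.single 0 1) σ₁ *
        MvPowerSeries.coeff (Finsupp.single 1 1) σ₂ -
      MvPowerSeries.coeff (Finsupp.single 1 1) σ₁ *
        MvPowerSeries.coeff (Finsupp.single 0 1) σ₂ ≠ 0 ∧
    PowerSeries.constantCoeff ρ = 0 ∧ PowerSeries.coeff 1 ρ ≠ 0 ∧
    subst2 (substt ρ F.paramX) (substt ρ F.paramY) σ₁ = G.paramX ∧
    subst2 (substt ρ F.paramX) (substt ρ F.paramY) σ₂ = G.paramY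

/-- `F` is the branch `y^n - x^m = 0`, i.e. has Puiseux parametrization `(t^n, t^m)`. -/
def IsMonomial (F : Branch) (n m : ℕ) : Prop :=
  F.n = n ∧ ∀ i, F.a i = if i = m then 1 else 0

/-- `F` belongs to the family `B ⊆ K(n₁, m₁)` of plane branches analytically equivalent to
`y^{n₁} - x^{m₁} = 0`. -/
def InFamilyB (n₁ m₁ : ℕ) (F : Branch) : Prop :=
  ∃ M : Branch, M.IsMonomial n₁ m₁ ∧ F.AEquiv M

/-- `lam` is the (finite) Zariski invariant `λ_F` of `F`: the branch `F` is analytically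
equivalent to a branch with Puiseux parametrization
`(t^n, t^m + b t^lam + Σ_{i>lam} b_i t^i)` with `b ≠ 0` and `lam + n ∉ Γ_F`,
where `m = β_1`. -/
def HasZariskiInvariant (F : Branch) (lam : ℕ) : Prop :=
  ∃ G : Branch, F.AEquiv G ∧ G.n = F.n ∧
    (∀ i < F.beta 1, G.a i = 0) ∧ G.a (F.beta 1) = 1 ∧
    (∀ i, F.beta 1 < i → i < lam → G.a i = 0) ∧
    G.a lam ≠ 0 ∧ lam + F.n ∉ F.gamma

end Branch

/-- The pullback `Σ_j c_j(t^n) y(t)^j` of a curve `f = Σ_j c_j(x) y^j ∈ ℂ{x}[y]` under a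
parametrization `(t^n, y(t))`. -/
def pullbackWeierstrass (n : ℕ) (y : PowerSeries ℂ) (f : Polynomial (PowerSeries ℂ)) :
    PowerSeries ℂ :=
  ∑ j ∈ Finset.range (f.natDegree + 1), substt (PowerSeries.X ^ n) (f.coeff j) * y ^ j

/-- `f ∈ ℂ{x}[y]` is a Weierstrass polynomial of degree `n`. -/
def IsWeierstrass (f : Polynomial (PowerSeries ℂ)) (n : ℕ) : Prop :=
  f.Monic ∧ f.natDegree = n ∧ ∀ j < n, PowerSeries.constantCoeff (f.coeff j) = 0

end
section AuxNF

lemma substt_X_pow_coeff (n : ℕ) (hn : 0 < n) (c : PowerSeries ℂ) (k : ℕ) :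
    PowerSeries.coeff k (substt (PowerSeries.X ^ n) c) =
      if n ∣ k then PowerSeries.coeff (k / n) c else 0 := by
  rw [substt, PowerSeries.coeff_mk]
  by_cases h : n ∣ k
  · obtain ⟨i, rfl⟩ := h
    rw [if_pos ⟨i, rfl⟩, Nat.mul_div_cancel_left i hn]
    rw [Finset.sum_eq_single i]
    · rw [← pow_mul, PowerSeries.coeff_X_pow, if_pos rfl, mul_one]
    · intro j _ hne
      rw [← pow_mul, PowerSeries.coeff_X_pow, if_neg, mul_zero]
      exact fun hh => hne (Nat.eq_of_mul_eq_mul_left hn hh.symm)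
    · intro hi
      exact absurd (Finset.mem_range.2 (Nat.lt_succ_of_le (Nat.le_mul_of_pos_left i hn))) hi
  · rw [if_neg h, Finset.sum_eq_zero]
    intro j _
    rw [← pow_mul, PowerSeries.coeff_X_pow, if_neg, mul_zero]
    exact fun hh => h ⟨j, hh⟩

lemma uniq_weight {n m : ℕ} (hn : 0 < n) (hgcd : Nat.gcd n m = 1) {i1 j1 i2 j2 : ℕ}
    (h1 : j1 < n) (h2 : j2 < n) (h : i1 * n + j1 * m = i2 * n + j2 * m) :
    i1 = i2 ∧ j1 = j2 := by
  have z1 : i1 * n ≡ 0 [MOD n] := Nat.modEq_zero_iff_dvd.2 (dvd_mul_left n i1)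
  have z2 : i2 * n ≡ 0 [MOD n] := Nat.modEq_zero_iff_dvd.2 (dvd_mul_left n i2)
  have a1 : j1 * m ≡ i1 * n + j1 * m [MOD n] := by
    simpa using (Nat.ModEq.add_right (j1 * m) z1).symm
  have a2 : i2 * n + j2 * m ≡ j2 * m [MOD n] := by
    simpa using Nat.ModEq.add_right (j2 * m) z2
  have hmod : j1 * m ≡ j2 * m [MOD n] := a1.trans (h ▸ a2)
  have hj : j1 = j2 := by
    have := Nat.ModEq.cancel_right_of_coprime hgcd hmod
    rwa [Nat.ModEq, Nat.mod_eq_of_lt h1, Nat.mod_eq_of_lt h2] at this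
  subst hj
  have : i1 * n = i2 * n := by omega
  exact ⟨Nat.eq_of_mul_eq_mul_right hn this, rfl⟩

lemma exists_pq (n m W : ℕ) (hn : 0 < n) (hgcd : Nat.gcd n m = 1) (hWm : (n - 1) * m ≤ W) :
    ∃ p q : ℕ, q < n ∧ p * n + q * m = W := by
  haveI : NeZero n := ⟨hn.ne'⟩
  set q : ℕ := ((W : ZMod n) * (m : ZMod n)⁻¹).val with hqdef
  have hq : q < n := ZMod.val_lt _
  have hqm : ((q * m : ℕ) : ZMod n) = (W : ZMod n) := by
    have hu : (m : ZMod n) * (m : ZMod n)⁻¹ = 1 :=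
      ZMod.coe_mul_inv_eq_one m (Nat.Coprime.symm hgcd)
    push_cast
    rw [hqdef, ZMod.natCast_zmod_val, mul_assoc, mul_comm ((m : ZMod n))⁻¹, hu, mul_one]
  have hle : q * m ≤ W := by
    calc q * m ≤ (n - 1) * m := Nat.mul_le_mul_right m (by omega)
    _ ≤ W := hWm
  have hdvd : n ∣ W - q * m := by
    have : ((W - q * m : ℕ) : ZMod n) = 0 := by rw [Nat.cast_sub hle, hqm, sub_self]
    exact (ZMod.natCast_eq_zero_iff _ _).1 this
  refine ⟨(W - q * m) / n, q, hq, ?_⟩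
  rw [Nat.div_mul_cancel hdvd]
  omega

lemma ypow_coeffs (y : PowerSeries ℂ) (m δ : ℕ) (hm : 0 < m) (hδ : 0 < δ)
    (h0 : ∀ e < m, PowerSeries.coeff e y = 0) (h1 : PowerSeries.coeff m y = 1)
    (h2 : ∀ e, m < e → e < m + δ → PowerSeries.coeff e y = 0) :
    ∀ j : ℕ, (∀ e < j * m, PowerSeries.coeff e (y ^ j) = 0) ∧
      PowerSeries.coeff (j * m) (y ^ j) = 1 ∧
      (∀ e, j * m < e → e < j * m + δ → PowerSeries.coeff e (y ^ j) = 0) ∧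
      PowerSeries.coeff (j * m + δ) (y ^ j) = j * PowerSeries.coeff (m + δ) y := by
  intro j
  induction j with
  | zero =>
      refine ⟨fun e he => by omega, by simp, fun e he1 he2 => ?_, ?_⟩
      · simp only [pow_zero, PowerSeries.coeff_one, if_neg (by omega : e ≠ 0)]
      · rw [pow_zero, PowerSeries.coeff_one, if_neg (by omega : 0 * m + δ ≠ 0)]
        simp
  | succ j ih =>
      obtain ⟨iA, iB, iC, iD⟩ := ih
      have hypow : y ^ (j + 1) = y ^ j * y := pow_succ y j
      have hjm : (j + 1) * m = j * m + m := by ring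
      refine ⟨?_, ?_, ?_, ?_⟩
      · intro e he
        rw [hypow, PowerSeries.coeff_mul, Finset.sum_eq_zero]
        rintro ⟨u, v⟩ huv
        rw [Finset.HasAntidiagonal.mem_antidiagonal] at huv
        rcases lt_or_ge u (j * m) with hu | hu
        · rw [iA u hu, zero_mul]
        · have hv : v < m := by omega
          rw [h0 v hv, mul_zero]
      · rw [hypow, PowerSeries.coeff_mul]
        rw [Finset.sum_eq_single (j * m, m)]
        · rw [iB, h1, one_mul]
        · rintro ⟨u, v⟩ huv hne
          rw [Finset.HasAntidiagonal.mem_antidiagonal] at huv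
          rcases lt_trichotomy u (j * m) with hu | hu | hu
          · rw [iA u hu, zero_mul]
          · have hv : v = m := by omega
            exact absurd (by rw [hu, hv]) hne
          · have hv : v < m := by omega
            rw [h0 v hv, mul_zero]
        · intro habs
          exact absurd (Finset.HasAntidiagonal.mem_antidiagonal.2 (by omega)) habs
      · intro e he1 he2
        rw [hypow, PowerSeries.coeff_mul, Finset.sum_eq_zero]
        rintro ⟨u, v⟩ huv
        rw [Finset.HasAntidiagonal.mem_antidiagonal] at huv
        rcases lt_trichotomy u (j * m) with hu | hu | hu
        · rw [iA u hu, zero_mul]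
        · subst hu
          have hv1 : m < v := by omega
          have hv2 : v < m + δ := by omega
          rw [h2 v hv1 hv2, mul_zero]
        · rcases lt_or_ge u (j * m + δ) with hu2 | hu2
          · rw [iC u hu hu2, zero_mul]
          · have hv : v < m := by omega
            rw [h0 v hv, mul_zero]
      · rw [hypow, PowerSeries.coeff_mul]
        have hpair : ((j * m, m + δ) : ℕ × ℕ) ≠ (j * m + δ, m) := by
          intro hc
          have := congrArg Prod.fst hc
          simp only at this
          omega
        have hsub : ({(j * m, m + δ), (j * m + δ, m)} : Finset (ℕ × ℕ)) ⊆
            Finset.HasAntidiagonal.antidiagonal ((j + 1) * m + δ) := by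
          intro x hx
          simp only [Finset.mem_insert, Finset.mem_singleton] at hx
          rcases hx with rfl | rfl <;> rw [Finset.HasAntidiagonal.mem_antidiagonal] <;> omega
        have hzero : ∀ x ∈ Finset.HasAntidiagonal.antidiagonal ((j + 1) * m + δ),
            x ∉ ({(j * m, m + δ), (j * m + δ, m)} : Finset (ℕ × ℕ)) →
            PowerSeries.coeff x.1 (y ^ j) * PowerSeries.coeff x.2 y = 0 := by
          rintro ⟨u, v⟩ huv hnot
          rw [Finset.HasAntidiagonal.mem_antidiagonal] at huv
          simp only [Finset.mem_insert, Finset.mem_singleton, Prod.mk.injEq, not_or] at hnot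
          rcases lt_trichotomy u (j * m) with hu | hu | hu
          · rw [iA u hu, zero_mul]
          · have hv : v = m + δ := by omega
            exact absurd ⟨hu, hv⟩ hnot.1
          · rcases lt_trichotomy u (j * m + δ) with hu2 | hu2 | hu2
            · rw [iC u hu hu2, zero_mul]
            · have hv : v = m := by omega
              exact absurd ⟨hu2, hv⟩ hnot.2
            · have hv : v < m := by omega
              rw [h0 v hv, mul_zero]
        rw [← Finset.sum_subset hsub hzero]
        rw [Finset.sum_pair hpair, iB, iD, h1, mul_one, one_mul]
        push_cast
        ring

end AuxNF

/-- Let `C_F ∈ K(n, m)` with `gcd(n, m) = 1` and finite Zariski invariant `λ_F`, given in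
coordinates where its Puiseux parametrization is `(t^n, t^m + b t^λ + Σ_{i>λ} b_i t^i)` with
`b ≠ 0` and `λ + n ∉ ⟨n, m⟩`, and let `f ∈ ℂ{x}[y]` be its Weierstrass polynomial.  Then there
are `p, q ∈ ℕ` with `q < n` and `p n + q m = (n - 1)m + λ`, and a unique `c ≠ 0`, such that
`f = y^n - x^m + c x^p y^q + Σ_{i n + j m > p n + q m, j < n} a_{ij} x^i y^j`. -/
theorem normal_form_one_characteristic_exponent (F : Branch) (lam : ℕ)
    (hgcd : Nat.gcd F.n (F.beta 1) = 1)
    (hlow : ∀ i < F.beta 1, F.a i = 0) (hm : F.a (F.beta 1) = 1)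
    (hmid : ∀ i, F.beta 1 < i → i < lam → F.a i = 0) (hb : F.a lam ≠ 0)
    (hnot : ¬ ∃ u v : ℕ, lam + F.n = u * F.n + v * F.beta 1)
    (f : Polynomial (PowerSeries ℂ)) (hW : IsWeierstrass f F.n)
    (hdef : pullbackWeierstrass F.n F.paramY f = 0) :
    ∃ p q : ℕ, q < F.n ∧ p * F.n + q * F.beta 1 = (F.n - 1) * F.beta 1 + lam ∧
      ∃! c : ℂ, c ≠ 0 ∧
        ∃ R : Polynomial (PowerSeries ℂ),
          R.degree < (F.n : ℕ) ∧
          (∀ i j : ℕ, i * F.n + j * F.beta 1 ≤ p * F.n + q * F.beta 1 →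
            PowerSeries.coeff i (R.coeff j) = 0) ∧
          f = Polynomial.X ^ F.n - Polynomial.C (PowerSeries.X ^ F.beta 1) +
              Polynomial.C (PowerSeries.C c * PowerSeries.X ^ p) * Polynomial.X ^ q + R := by
  classical
  obtain ⟨hMon, hdeg, _hWei⟩ := hW
  have hn : 0 < F.n := F.npos
  have hnm : F.n < F.beta 1 := by
    by_contra hcon
    push_neg at hcon
    have h0 := F.lowZero _ hcon
    rw [hm] at h0
    exact one_ne_zero h0
  have hml : F.beta 1 < lam := by
    rcases lt_trichotomy lam (F.beta 1) with h | h | h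
    · exact absurd (hlow lam h) hb
    · exact absurd ⟨1, 1, by rw [h]; ring⟩ hnot
    · exact h
  set δ := lam - F.beta 1 with hδdef
  have hδ : 0 < δ := by omega
  have hlamδ : F.beta 1 + δ = lam := by omega
  have hcomm : F.beta 1 * F.n = F.n * F.beta 1 := mul_comm _ _
  have hfn1 : f.coeff F.n = 1 := by rw [← hdeg]; exact hMon.coeff_natDegree
  -- coefficients of paramY
  have hy : ∀ e, PowerSeries.coeff e F.paramY = F.a e := fun e => by
    rw [Branch.paramY, PowerSeries.coeff_mk]
  have hy0 : ∀ e < F.beta 1, PowerSeries.coeff e F.paramY = 0 := fun e he => by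
    rw [hy]; exact hlow e he
  have hy1 : PowerSeries.coeff (F.beta 1) F.paramY = 1 := by rw [hy]; exact hm
  have hy2 : ∀ e, F.beta 1 < e → e < F.beta 1 + δ → PowerSeries.coeff e F.paramY = 0 :=
    fun e h1 h2 => by rw [hy]; exact hmid e h1 (by omega)
  have hylam : PowerSeries.coeff (F.beta 1 + δ) F.paramY = F.a lam := by rw [hlamδ, hy]
  have ypow := ypow_coeffs F.paramY (F.beta 1) δ (by omega) hδ hy0 hy1 hy2
  -- the key equation, coefficientwise
  have key : ∀ w : ℕ, (∑ j ∈ Finset.range (F.n + 1),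
      ∑ pr ∈ Finset.HasAntidiagonal.antidiagonal w,
        (if F.n ∣ pr.1 then PowerSeries.coeff (pr.1 / F.n) (f.coeff j) else 0) *
          PowerSeries.coeff pr.2 (F.paramY ^ j)) = 0 := by
    intro w
    have h0 : (∑ j ∈ Finset.range (f.natDegree + 1),
        substt (PowerSeries.X ^ F.n) (f.coeff j) * F.paramY ^ j) = 0 := hdef
    rw [hdeg] at h0
    have h1 := congrArg (PowerSeries.coeff w) h0
    rw [map_sum, map_zero] at h1
    have hsum : (∑ j ∈ Finset.range (F.n + 1),
        ∑ pr ∈ Finset.HasAntidiagonal.antidiagonal w,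
          (if F.n ∣ pr.1 then PowerSeries.coeff (pr.1 / F.n) (f.coeff j) else 0) *
            PowerSeries.coeff pr.2 (F.paramY ^ j)) =
        (∑ j ∈ Finset.range (F.n + 1),
          PowerSeries.coeff w (substt (PowerSeries.X ^ F.n) (f.coeff j) * F.paramY ^ j)) := by
      refine Finset.sum_congr rfl fun j _ => ?_
      rw [PowerSeries.coeff_mul]
      refine Finset.sum_congr rfl fun pr _ => ?_
      rw [substt_X_pow_coeff F.n hn]
    rw [hsum]
    exact h1
  -- main evaluation
  have EVAL : ∀ w, w ≤ F.n * F.beta 1 + δ →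
      (∀ w', w' < w → ∀ i j, j < F.n → i * F.n + j * F.beta 1 = w' →
        PowerSeries.coeff i (f.coeff j) = if j = 0 ∧ i = F.beta 1 then -1 else 0) →
      ∀ i j, j < F.n → i * F.n + j * F.beta 1 = w →
      PowerSeries.coeff i (f.coeff j) =
        - PowerSeries.coeff w (F.paramY ^ F.n) := by
    intro w _hwW IH i j hj hij
    have h := key w
    rw [Finset.sum_range_succ] at h
    have hlast : (∑ pr ∈ Finset.HasAntidiagonal.antidiagonal w,
        (if F.n ∣ pr.1 then PowerSeries.coeff (pr.1 / F.n) (f.coeff F.n) else 0) *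
          PowerSeries.coeff pr.2 (F.paramY ^ F.n)) =
        PowerSeries.coeff w (F.paramY ^ F.n) := by
      rw [Finset.sum_eq_single (0, w)]
      · simp [hfn1, PowerSeries.coeff_one]
      · rintro ⟨u, v⟩ hmem hne
        rw [Finset.HasAntidiagonal.mem_antidiagonal] at hmem
        by_cases hdv : F.n ∣ u
        · have hu0 : u ≠ 0 := by
            rintro rfl
            apply hne
            have hvw : v = w := by simpa using hmem
            rw [hvw]
          have hq0 : u / F.n ≠ 0 := by
            intro h0'
            refine hu0 ?_
            have h2' := Nat.div_mul_cancel hdv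
            rw [h0', zero_mul] at h2'
            omega
          rw [if_pos hdv, hfn1, PowerSeries.coeff_one, if_neg hq0, zero_mul]
        · rw [if_neg hdv, zero_mul]
      · intro habs
        exact absurd (Finset.HasAntidiagonal.mem_antidiagonal.2 (zero_add w)) habs
    have hmain : (∑ j' ∈ Finset.range F.n, ∑ pr ∈ Finset.HasAntidiagonal.antidiagonal w,
        (if F.n ∣ pr.1 then PowerSeries.coeff (pr.1 / F.n) (f.coeff j') else 0) *
          PowerSeries.coeff pr.2 (F.paramY ^ j')) =
        PowerSeries.coeff i (f.coeff j) := by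
      rw [Finset.sum_eq_single j]
      · rw [Finset.sum_eq_single (i * F.n, j * F.beta 1)]
        · rw [if_pos (dvd_mul_left F.n i), Nat.mul_div_cancel i hn, (ypow j).2.1, mul_one]
        · rintro ⟨u, v⟩ hmem hne
          rw [Finset.HasAntidiagonal.mem_antidiagonal] at hmem
          by_cases hdv : F.n ∣ u
          · obtain ⟨i', hu⟩ := hdv
            have hu' : u = i' * F.n := by rw [hu, mul_comm]
            rcases lt_trichotomy v (j * F.beta 1) with hv | hv | hv
            · rw [(ypow j).1 v hv, mul_zero]
            · exfalso
              have hii : i' * F.n = i * F.n := by omega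
              have hii' : i' = i := Nat.eq_of_mul_eq_mul_right hn hii
              exact hne (by rw [hu', hv, hii'])
            · have hw' : i' * F.n + j * F.beta 1 < w := by omega
              have hIH := IH _ hw' i' j hj rfl
              by_cases hc : j = 0 ∧ i' = F.beta 1
              · have hv0 : v ≠ 0 := by
                  rw [hc.1] at hv
                  omega
                rw [hc.1, pow_zero, PowerSeries.coeff_one, if_neg hv0, mul_zero]
              · rw [if_pos ⟨i', hu⟩, hu, Nat.mul_div_cancel_left i' hn, hIH, if_neg hc,
                  zero_mul]
          · rw [if_neg hdv, zero_mul]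
        · intro habs
          exact absurd (Finset.HasAntidiagonal.mem_antidiagonal.2 hij) habs
      · intro j' hj'mem hne'
        have hj' : j' < F.n := Finset.mem_range.1 hj'mem
        refine Finset.sum_eq_zero ?_
        rintro ⟨u, v⟩ hmem
        rw [Finset.HasAntidiagonal.mem_antidiagonal] at hmem
        by_cases hdv : F.n ∣ u
        · obtain ⟨i', hu⟩ := hdv
          have hu' : u = i' * F.n := by rw [hu, mul_comm]
          rcases lt_trichotomy v (j' * F.beta 1) with hv | hv | hv
          · rw [(ypow j').1 v hv, mul_zero]
          · exfalso
            have heqw : i' * F.n + j' * F.beta 1 = i * F.n + j * F.beta 1 := by omega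
            exact hne' (uniq_weight hn hgcd hj' hj heqw).2
          · have hw' : i' * F.n + j' * F.beta 1 < w := by omega
            have hIH := IH _ hw' i' j' hj' rfl
            by_cases hc : j' = 0 ∧ i' = F.beta 1
            · have hv0 : v ≠ 0 := by
                rw [hc.1] at hv
                omega
              rw [hc.1, pow_zero, PowerSeries.coeff_one, if_neg hv0, mul_zero]
            · rw [if_pos ⟨i', hu⟩, hu, Nat.mul_div_cancel_left i' hn, hIH, if_neg hc,
                zero_mul]
        · rw [if_neg hdv, zero_mul]
      · intro habs
        exact absurd (Finset.mem_range.2 hj) habs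
    rw [hmain, hlast] at h
    exact eq_neg_of_add_eq_zero_left h
  -- values of the low-weight coefficients of f
  have Sall : ∀ w, w < F.n * F.beta 1 + δ → ∀ i j, j < F.n → i * F.n + j * F.beta 1 = w →
      PowerSeries.coeff i (f.coeff j) = if j = 0 ∧ i = F.beta 1 then -1 else 0 := by
    intro w
    induction w using Nat.strong_induction_on with
    | _ w IHw =>
      intro hwW i j hj hij
      have hA := EVAL w (le_of_lt hwW) (fun w' hw' => IHw w' hw' (lt_trans hw' hwW)) i j hj hij
      rcases lt_trichotomy w (F.n * F.beta 1) with hcase | hcase | hcase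
      · rw [hA, (ypow F.n).1 w hcase, neg_zero, if_neg]
        rintro ⟨rfl, rfl⟩
        omega
      · have huq : i = F.beta 1 ∧ j = 0 := by
          refine uniq_weight hn hgcd hj hn ?_
          rw [hij, hcase]
          ring
        rw [if_pos ⟨huq.2, huq.1⟩, hA, hcase, (ypow F.n).2.1]
      · rw [hA, (ypow F.n).2.2.1 w hcase (by omega), neg_zero, if_neg]
        rintro ⟨rfl, rfl⟩
        omega
  -- the lattice point (p, q) of weight W
  obtain ⟨p, q, hq, hpq⟩ := exists_pq F.n (F.beta 1) (F.n * F.beta 1 + δ) hn hgcd (by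
    have h1 : (F.n - 1) * F.beta 1 ≤ F.n * F.beta 1 :=
      Nat.mul_le_mul_right _ (Nat.sub_le _ _)
    omega)
  have hWeq : (F.n - 1) * F.beta 1 + lam = F.n * F.beta 1 + δ := by
    have h1 : (F.n - 1) * F.beta 1 = F.n * F.beta 1 - 1 * F.beta 1 := by rw [Nat.sub_mul]
    have h2 : 1 * F.beta 1 ≤ F.n * F.beta 1 := Nat.mul_le_mul_right _ hn
    omega
  have hApq := EVAL (F.n * F.beta 1 + δ) le_rfl (fun w' hw' => Sall w' hw') p q hq hpq
  have hyW : PowerSeries.coeff (F.n * F.beta 1 + δ) (F.paramY ^ F.n) =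
      (F.n : ℂ) * F.a lam := by
    have hD := (ypow F.n).2.2.2
    rw [hylam] at hD
    exact hD
  have hcval : PowerSeries.coeff p (f.coeff q) = -((F.n : ℂ) * F.a lam) := by
    rw [hApq, hyW]
  have hcne : PowerSeries.coeff p (f.coeff q) ≠ 0 := by
    rw [hcval]
    exact neg_ne_zero.2 (mul_ne_zero (Nat.cast_ne_zero.2 hn.ne') hb)
  have hpqne : ¬(q = 0 ∧ p = F.beta 1) := by
    rintro ⟨rfl, rfl⟩
    omega
  -- the combined description of all low-weight coefficients of f
  have hkey : ∀ i j, j < F.n → i * F.n + j * F.beta 1 ≤ F.n * F.beta 1 + δ →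
      PowerSeries.coeff i (f.coeff j) =
        (if j = 0 ∧ i = F.beta 1 then (-1 : ℂ) else 0) +
        (if j = q ∧ i = p then PowerSeries.coeff p (f.coeff q) else 0) := by
    intro i j hjn hle
    rcases lt_or_eq_of_le hle with hlt | heq
    · rw [Sall _ hlt i j hjn rfl,
        if_neg (show ¬(j = q ∧ i = p) by rintro ⟨rfl, rfl⟩; omega), add_zero]
    · obtain ⟨hip, hjq⟩ := uniq_weight hn hgcd hjn hq (heq.trans hpq.symm)
      rw [if_neg, if_pos ⟨hjq, hip⟩, zero_add, hip, hjq]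
      intro hc
      exact hpqne ⟨by omega, by omega⟩
  refine ⟨p, q, hq, by rw [hWeq]; exact hpq, PowerSeries.coeff p (f.coeff q),
    ⟨hcne, ?_⟩, ?_⟩
  · -- existence of the remainder R
    refine ⟨f - (Polynomial.X ^ F.n - Polynomial.C (PowerSeries.X ^ F.beta 1) +
      Polynomial.C (PowerSeries.C (PowerSeries.coeff p (f.coeff q)) *
        PowerSeries.X ^ p) * Polynomial.X ^ q), ?_, ?_, by ring⟩
    · -- degree bound
      have hfd : f.degree = (F.n : WithBot ℕ) := by
        rw [Polynomial.degree_eq_natDegree hMon.ne_zero, hdeg]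
      have hd1 : (f - Polynomial.X ^ F.n).degree < (F.n : WithBot ℕ) := by
        have hd := Polynomial.degree_sub_lt (q := Polynomial.X ^ F.n)
          (by rw [hfd, Polynomial.degree_X_pow]) hMon.ne_zero
          (by rw [hMon.leadingCoeff, (Polynomial.monic_X_pow F.n).leadingCoeff])
        rwa [hfd] at hd
      have hrw : f - (Polynomial.X ^ F.n - Polynomial.C (PowerSeries.X ^ F.beta 1) +
          Polynomial.C (PowerSeries.C (PowerSeries.coeff p (f.coeff q)) *
            PowerSeries.X ^ p) * Polynomial.X ^ q) =
          (f - Polynomial.X ^ F.n) + (Polynomial.C (PowerSeries.X ^ F.beta 1) -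
          Polynomial.C (PowerSeries.C (PowerSeries.coeff p (f.coeff q)) *
            PowerSeries.X ^ p) * Polynomial.X ^ q) := by ring
      rw [hrw]
      refine lt_of_le_of_lt (Polynomial.degree_add_le _ _) (max_lt hd1 ?_)
      refine lt_of_le_of_lt (Polynomial.degree_sub_le _ _) (max_lt ?_ ?_)
      · exact lt_of_le_of_lt Polynomial.degree_C_le (by exact_mod_cast hn)
      · refine lt_of_le_of_lt (Polynomial.degree_mul_le _ _) ?_
        refine lt_of_le_of_lt (add_le_add Polynomial.degree_C_le
          (le_of_eq (Polynomial.degree_X_pow q))) ?_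
        rw [zero_add]
        exact_mod_cast hq
    · -- vanishing of the low-weight coefficients of R
      intro i j hij
      rw [hpq] at hij
      rcases lt_trichotomy j F.n with hjn | hjn | hjn
      · have h1 := hkey i j hjn hij
        have hcoeffR : PowerSeries.coeff i
            ((f - (Polynomial.X ^ F.n - Polynomial.C (PowerSeries.X ^ F.beta 1) +
              Polynomial.C (PowerSeries.C (PowerSeries.coeff p (f.coeff q)) *
                PowerSeries.X ^ p) * Polynomial.X ^ q)).coeff j) =
            PowerSeries.coeff i (f.coeff j) +
            (if j = 0 ∧ i = F.beta 1 then (1 : ℂ) else 0) -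
            (if j = q ∧ i = p then PowerSeries.coeff p (f.coeff q) else 0) := by
          have e3 : PowerSeries.coeff i ((Polynomial.X ^ F.n :
              Polynomial (PowerSeries ℂ)).coeff j) = 0 := by
            rw [Polynomial.coeff_X_pow, if_neg hjn.ne, map_zero]
          have e1 : PowerSeries.coeff i
              ((Polynomial.C (PowerSeries.X ^ F.beta 1)).coeff j) =
              if j = 0 ∧ i = F.beta 1 then (1 : ℂ) else 0 := by
            rw [Polynomial.coeff_C]
            by_cases hj0 : j = 0
            · rw [if_pos hj0, PowerSeries.coeff_X_pow]
              by_cases hiB : i = F.beta 1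
              · rw [if_pos hiB, if_pos ⟨hj0, hiB⟩]
              · rw [if_neg hiB, if_neg (fun hc => hiB hc.2)]
            · rw [if_neg hj0, map_zero, if_neg (fun hc => hj0 hc.1)]
          have e2 : PowerSeries.coeff i
              ((Polynomial.C (PowerSeries.C (PowerSeries.coeff p (f.coeff q)) *
                PowerSeries.X ^ p) * Polynomial.X ^ q).coeff j) =
              if j = q ∧ i = p then PowerSeries.coeff p (f.coeff q) else 0 := by
            rw [Polynomial.coeff_C_mul, Polynomial.coeff_X_pow]
            by_cases hjq : j = q
            · rw [if_pos hjq, mul_one, PowerSeries.coeff_C_mul_X_pow]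
              by_cases hip : i = p
              · rw [if_pos hip, if_pos ⟨hjq, hip⟩]
              · rw [if_neg hip, if_neg (fun hc => hip hc.2)]
            · rw [if_neg hjq, mul_zero, map_zero, if_neg (fun hc => hjq hc.1)]
          rw [Polynomial.coeff_sub, map_sub, Polynomial.coeff_add, map_add,
            Polynomial.coeff_sub, map_sub, e3, e1, e2]
          ring
        rw [hcoeffR, h1]
        split_ifs <;> ring
      · subst hjn
        rw [Polynomial.coeff_sub, Polynomial.coeff_add, Polynomial.coeff_sub,
          Polynomial.coeff_X_pow, if_pos rfl, Polynomial.coeff_C, if_neg hn.ne',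
          Polynomial.coeff_C_mul, Polynomial.coeff_X_pow, if_neg hq.ne', mul_zero, hfn1]
        simp
      · have hz : f.coeff j = 0 :=
          Polynomial.coeff_eq_zero_of_natDegree_lt (by rw [hdeg]; exact hjn)
        rw [Polynomial.coeff_sub, Polynomial.coeff_add, Polynomial.coeff_sub,
          Polynomial.coeff_X_pow, if_neg (by omega : j ≠ F.n), Polynomial.coeff_C,
          if_neg (by omega : j ≠ 0), Polynomial.coeff_C_mul, Polynomial.coeff_X_pow,
          if_neg (by omega : j ≠ q), mul_zero, hz]
        simp
  · -- uniqueness of c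
    rintro c' ⟨hc'ne, R', hdR', hvan', hfeq'⟩
    have h := congrArg (fun g : Polynomial (PowerSeries ℂ) =>
      PowerSeries.coeff p (g.coeff q)) hfeq'
    rw [Polynomial.coeff_add, Polynomial.coeff_add, Polynomial.coeff_sub,
      Polynomial.coeff_X_pow, if_neg hq.ne, Polynomial.coeff_C,
      Polynomial.coeff_C_mul, Polynomial.coeff_X_pow, if_pos rfl, mul_one] at h
    rw [map_add, map_add, map_sub, map_zero, PowerSeries.coeff_C_mul_X_pow,
      if_pos rfl] at h
    rw [hvan' p q le_rfl] at h
    have hXz : PowerSeries.coeff p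
        (if q = 0 then (PowerSeries.X ^ F.beta 1 : PowerSeries ℂ) else 0) = 0 := by
      by_cases hq0 : q = 0
      · rw [if_pos hq0, PowerSeries.coeff_X_pow, if_neg (fun hpp => hpqne ⟨hq0, hpp⟩)]
      · rw [if_neg hq0, map_zero]
    rw [hXz] at h
    simpa using h.symm
end

section
/- Let C_f ∈ K(β_0, β_1, …, β_g) and C_h ∈ K(β′_0, β′_1, …, β′_{g′}) be plane branches with values semigroups Γ_f = ⟨v_0, …, v_g⟩ and Γ_h = ⟨v′_0, …, v′_{g′}⟩, and set e_i = gcd(β_0, …, β_i), e′_i = gcd(β′_0, …, β′_i). If cont(C_f, C_h) > β_k/β_0 for some k ≤ min(g, g′), then e_i/e′_i = β_i/β′_i = v_i/v′_i for all 0 ≤ i ≤ k. -/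
open scoped Classical

section Aux
namespace Branch

lemma beta_zero' (F : Branch) : F.beta 0 = F.n := rfl
lemma e_zero' (F : Branch) : F.e 0 = F.n := rfl
lemma beta_succ' (F : Branch) (j : ℕ) :
    F.beta (j+1) = sInf {i | F.a i ≠ 0 ∧ ¬ F.e j ∣ i} := rfl
lemma e_succ' (F : Branch) (j : ℕ) :
    F.e (j+1) = Nat.gcd (F.e j) (F.beta (j+1)) := rfl
lemma genus_def (F : Branch) : F.genus = sInf {g | F.e g = 1} := rfl
lemma v_zero' (F : Branch) : F.v 0 = F.n := rfl
lemma v_one' (F : Branch) : F.v 1 = F.beta 1 := rfl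
lemma v_two' (F : Branch) (j : ℕ) :
    F.v (j+2) = F.e j / F.e (j+1) * F.v (j+1) + F.beta (j+2) - F.beta (j+1) := rfl

lemma e_succ_dvd (F : Branch) (j : ℕ) : F.e (j+1) ∣ F.e j := by
  rw [e_succ']; exact Nat.gcd_dvd_left _ _

lemma e_dvd_n (F : Branch) : ∀ j, F.e j ∣ F.n
  | 0 => dvd_refl _
  | (j+1) => (F.e_succ_dvd j).trans (F.e_dvd_n j)

lemma e_pos (F : Branch) : ∀ j, 0 < F.e j
  | 0 => F.npos
  | (j+1) => by rw [e_succ']; exact Nat.gcd_pos_of_pos_left _ (F.e_pos j)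

lemma e_ne_one (F : Branch) {m : ℕ} (h : m < F.genus) : F.e m ≠ 1 := by
  intro h1
  have := Nat.sInf_le (show m ∈ {g | F.e g = 1} from h1)
  rw [← genus_def] at this
  omega

lemma betaSet_nonempty (F : Branch) {m : ℕ} (h : m < F.genus) :
    {i | F.a i ≠ 0 ∧ ¬ F.e m ∣ i}.Nonempty := by
  by_contra hne
  rw [Set.not_nonempty_iff_eq_empty] at hne
  apply F.e_ne_one h
  apply F.primitive _ (F.e_dvd_n m)
  intro i hi
  by_contra hd
  have : i ∈ {i | F.a i ≠ 0 ∧ ¬ F.e m ∣ i} := ⟨hi, hd⟩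
  rw [hne] at this
  exact this

lemma beta_mem (F : Branch) {m : ℕ} (h : m < F.genus) :
    F.a (F.beta (m+1)) ≠ 0 ∧ ¬ F.e m ∣ F.beta (m+1) := by
  rw [beta_succ']; exact Nat.sInf_mem (F.betaSet_nonempty h)

lemma beta_gt_n (F : Branch) {m : ℕ} (h : m < F.genus) : F.n < F.beta (m+1) := by
  by_contra hle
  exact (F.beta_mem h).1 (F.lowZero _ (not_lt.mp hle))

lemma beta_le_succ (F : Branch) {m : ℕ} (h : m < F.genus) : F.beta m ≤ F.beta (m+1) := by
  cases m with
  | zero => rw [beta_zero']; exact le_of_lt (F.beta_gt_n h)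
  | succ m =>
    have hmem := F.beta_mem h
    have hnd : ¬ F.e m ∣ F.beta (m+2) := fun hd => hmem.2 ((F.e_succ_dvd m).trans hd)
    rw [beta_succ' F m]
    exact Nat.sInf_le ⟨(F.beta_mem h).1, hnd⟩

lemma beta_mono (F : Branch) : ∀ {i k : ℕ}, i ≤ k → k ≤ F.genus → F.beta i ≤ F.beta k := by
  intro i k
  induction k with
  | zero => intro h _; have : i = 0 := by omega
            subst this; exact le_refl _
  | succ k ih =>
    intro hik hk
    rcases Nat.lt_or_ge i (k+1) with h | h
    · exact le_trans (ih (by omega) (by omega)) (F.beta_le_succ (by omega))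
    · have : i = k+1 := by omega
      subst this; exact le_refl _

end Branch
end Aux
section Aux2
namespace Branch

lemma rootCoeff_spec (F : Branch) (j : ℕ) {q : ℚ} {i : ℕ} (hi : (i : ℚ) = q * F.n) :
    F.rootCoeff j q = F.a i * Complex.exp (2 * Real.pi * Complex.I * j * i / F.n) := by
  have hex : ∃ i : ℕ, (i : ℚ) = q * F.n := ⟨i, hi⟩
  unfold rootCoeff
  rw [dif_pos hex]
  have hc : hex.choose = i := Nat.cast_injective (hex.choose_spec.trans hi.symm)
  rw [hc]

lemma rootCoeff_eq_zero (F : Branch) (j : ℕ) {q : ℚ}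
    (h : ¬ ∃ i : ℕ, (i : ℚ) = q * F.n) : F.rootCoeff j q = 0 := by
  unfold rootCoeff
  rw [dif_neg h]

/-- the key combinatorial step: correspondence of nonzero coefficients transfers the
characteristic data. -/
lemma key (F H : Branch) (k : ℕ) (hkF : k ≤ F.genus)
    (B1 : ∀ i ≤ F.beta k, F.a i ≠ 0 → ∃ i', i' * F.n = i * H.n ∧ H.a i' ≠ 0)
    (B2 : ∀ i', i' * F.n ≤ F.beta k * H.n → H.a i' ≠ 0 → ∃ i, i * H.n = i' * F.n ∧ F.a i ≠ 0) :
    ∀ m, m ≤ k → F.beta m * H.n = H.beta m * F.n ∧ F.e m * H.n = H.e m * F.n := by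
  intro m
  induction m with
  | zero =>
    intro _
    rw [beta_zero', beta_zero', e_zero', e_zero']
    exact ⟨mul_comm _ _, mul_comm _ _⟩
  | succ m ih =>
    intro hmk
    obtain ⟨hbm, hem⟩ := ih (by omega)
    have hmg : m < F.genus := by omega
    have hmem := F.beta_mem hmg
    have hble : F.beta (m+1) ≤ F.beta k := F.beta_mono hmk hkF
    obtain ⟨b', hb'cross, hb'ne⟩ := B1 _ hble hmem.1
    have hb'mem : H.a b' ≠ 0 ∧ ¬ H.e m ∣ b' := by
      refine ⟨hb'ne, fun hdvd => hmem.2 ?_⟩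
      have h1 : H.e m * F.n ∣ b' * F.n := mul_dvd_mul_right hdvd _
      rw [← hem, hb'cross] at h1
      exact (Nat.mul_dvd_mul_iff_right H.npos).mp h1
    have hle1 : H.beta (m+1) ≤ b' := by
      rw [beta_succ']; exact Nat.sInf_le hb'mem
    have hmemH : H.a (H.beta (m+1)) ≠ 0 ∧ ¬ H.e m ∣ H.beta (m+1) := by
      rw [beta_succ']; exact Nat.sInf_mem (⟨b', hb'mem⟩ : {i | H.a i ≠ 0 ∧ ¬ H.e m ∣ i}.Nonempty)
    have hle2 : H.beta (m+1) * F.n ≤ F.beta k * H.n := by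
      calc H.beta (m+1) * F.n ≤ b' * F.n := Nat.mul_le_mul_right _ hle1
        _ = F.beta (m+1) * H.n := hb'cross
        _ ≤ F.beta k * H.n := Nat.mul_le_mul_right _ hble
    obtain ⟨i, hicross, hine⟩ := B2 _ hle2 hmemH.1
    -- i ≤ β_{m+1}
    have hile : i * H.n ≤ F.beta (m+1) * H.n := by
      rw [hicross, ← hb'cross]
      exact Nat.mul_le_mul_right _ hle1
    have hile' : i ≤ F.beta (m+1) := Nat.le_of_mul_le_mul_right hile H.npos
    have hib : i = F.beta (m+1) := by
      rcases eq_or_lt_of_le hile' with h | hlt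
      · exact h
      · exfalso
        have hdvd : F.e m ∣ i := by
          by_contra hnd
          have : F.beta (m+1) ≤ i := by
            rw [beta_succ']; exact Nat.sInf_le ⟨hine, hnd⟩
          omega
        apply hmemH.2
        have h1 : F.e m * H.n ∣ i * H.n := mul_dvd_mul_right hdvd _
        rw [hem, hicross] at h1
        exact (Nat.mul_dvd_mul_iff_right F.npos).mp h1
    have hbcross : F.beta (m+1) * H.n = H.beta (m+1) * F.n := by
      rw [← hib]; exact hicross
    refine ⟨hbcross, ?_⟩
    rw [e_succ', e_succ', ← Nat.gcd_mul_right, ← Nat.gcd_mul_right, hem, hbcross]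

lemma vkey (F H : Branch) (k : ℕ)
    (hb : ∀ m, m ≤ k → F.beta m * H.n = H.beta m * F.n ∧ F.e m * H.n = H.e m * F.n) :
    ∀ m, m ≤ k → F.v m * H.n = H.v m * F.n := by
  intro m
  induction m with
  | zero => intro _; rw [v_zero', v_zero']; exact mul_comm _ _
  | succ m ih =>
    match m, ih with
    | 0, _ =>
      intro h1
      rw [v_one', v_one']
      exact (hb 1 h1).1
    | (m+1), ih =>
      intro hmk
      have ihv := ih (by omega)
      have hbm1 := hb (m+1) (by omega)
      have hbm2 := hb (m+2) hmk
      have hq : F.e m / F.e (m+1) = H.e m / H.e (m+1) := by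
        have h1 : F.e m / F.e (m+1) = F.e m * H.n / (F.e (m+1) * H.n) :=
          (Nat.mul_div_mul_right _ _ H.npos).symm
        have h2 : H.e m / H.e (m+1) = H.e m * F.n / (H.e (m+1) * F.n) :=
          (Nat.mul_div_mul_right _ _ F.npos).symm
        rw [h1, h2, (hb m (by omega)).2, (hb (m+1) (by omega)).2]
      rw [v_two', v_two', Nat.sub_mul, Nat.sub_mul, add_mul, add_mul,
        mul_assoc, mul_assoc, ihv, hbm1.1, hbm2.1, hq]

lemma beta_pos (F : Branch) {m : ℕ} (h : m ≤ F.genus) : 0 < F.beta m := by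
  cases m with
  | zero => exact F.npos
  | succ m => exact lt_trans F.npos (F.beta_gt_n (by omega))

lemma v_pos (F : Branch) : ∀ m, m ≤ F.genus → 0 < F.v m := by
  intro m
  induction m with
  | zero => intro _; exact F.npos
  | succ m ih =>
    match m, ih with
    | 0, _ =>
      intro h1
      rw [v_one']
      exact F.beta_pos h1
    | (m+1), ih =>
      intro hmg
      have hv := ih (by omega)
      have hq : 1 ≤ F.e m / F.e (m+1) :=
        (Nat.one_le_div_iff (F.e_pos (m+1))).mpr (Nat.le_of_dvd (F.e_pos m) (F.e_succ_dvd m))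
      have hble : F.beta (m+1) ≤ F.beta (m+2) := F.beta_mono (by omega) hmg
      have hvle : F.v (m+1) ≤ F.e m / F.e (m+1) * F.v (m+1) := Nat.le_mul_of_pos_left _ (by omega)
      rw [v_two']
      omega

end Branch
end Aux2
/-- If `cont(C_F, C_H) > β_k/β₀` for some `k ≤ min(g, g')`, then
`e_i/e'_i = β_i/β'_i = v_i/v'_i` for all `0 ≤ i ≤ k`. -/
theorem contact_gt_implies_proportional (F H : Branch) (k : ℕ)
    (hkF : k ≤ F.genus) (hkH : k ≤ H.genus)
    (hc : (((F.beta k : ℚ) / (F.beta 0 : ℚ) : ℚ) : WithTop ℚ) < F.contact H) :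
    ∀ i ≤ k,
      (F.e i : ℚ) / (H.e i : ℚ) = (F.beta i : ℚ) / (H.beta i : ℚ) ∧
      (F.beta i : ℚ) / (H.beta i : ℚ) = (F.v i : ℚ) / (H.v i : ℚ) := by
  have hNQ : (0:ℚ) < (F.n : ℚ) := by exact_mod_cast F.npos
  have hN'Q : (0:ℚ) < (H.n : ℚ) := by exact_mod_cast H.npos
  -- extract a pair of roots with large contact
  have hpair : ∃ p : Fin F.n × Fin H.n,
      (((F.beta k : ℚ) / (F.beta 0 : ℚ) : ℚ) : WithTop ℚ) < F.rootDiffOrder H p.1 p.2 := by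
    by_contra hcon
    push_neg at hcon
    refine absurd hc (not_lt.mpr ?_)
    unfold Branch.contact
    exact Finset.sup'_le _ _ fun p _ => hcon p
  obtain ⟨p, hp⟩ := hpair
  -- agreement of coefficients up to order β_k / n
  have A0 : ∀ m : ℕ, m ≤ F.beta k * H.n →
      F.rootCoeff p.1 ((m:ℚ)/(F.n*H.n)) = H.rootCoeff p.2 ((m:ℚ)/(F.n*H.n)) := by
    intro m hm
    by_contra hne
    have hex : ∃ kk : ℕ, F.rootCoeff (p.1 : ℕ) ((kk:ℚ)/(F.n*H.n)) ≠
        H.rootCoeff (p.2 : ℕ) ((kk:ℚ)/(F.n*H.n)) := ⟨m, hne⟩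
    unfold Branch.rootDiffOrder at hp
    rw [dif_pos hex] at hp
    have hfind : Nat.find hex ≤ m := Nat.find_le hne
    have hlt : (F.beta k : ℚ)/(F.beta 0 : ℚ) < (Nat.find hex : ℚ)/((F.n : ℚ) * (H.n : ℚ)) := by
      exact_mod_cast hp
    have hge : (Nat.find hex : ℚ)/((F.n:ℚ) * (H.n:ℚ)) ≤ (F.beta k : ℚ)/(F.beta 0 : ℚ) := by
      rw [Branch.beta_zero', div_le_div_iff₀ (by positivity) hNQ]
      have h1 : (Nat.find hex : ℚ) ≤ ((F.beta k * H.n : ℕ) : ℚ) := by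
        exact_mod_cast le_trans hfind hm
      push_cast at h1 ⊢
      nlinarith
    exact absurd hlt (not_lt.mpr hge)
  -- coefficient correspondences
  have B1 : ∀ i ≤ F.beta k, F.a i ≠ 0 → ∃ i', i' * F.n = i * H.n ∧ H.a i' ≠ 0 := by
    intro i hi hai
    have hm : i * H.n ≤ F.beta k * H.n := Nat.mul_le_mul_right _ hi
    have heq := A0 (i * H.n) hm
    have hiq : (i : ℚ) = (((i * H.n : ℕ) : ℚ)/((F.n:ℚ)*(H.n:ℚ))) * (F.n : ℚ) := by
      push_cast; field_simp
    rw [Branch.rootCoeff_spec F (p.1 : ℕ) hiq] at heq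
    have hFne : F.a i * Complex.exp (2 * Real.pi * Complex.I * (p.1 : ℕ) * i / F.n) ≠ 0 :=
      mul_ne_zero hai (Complex.exp_ne_zero _)
    have hex' : ∃ i' : ℕ, (i' : ℚ) = (((i * H.n : ℕ) : ℚ)/((F.n:ℚ)*(H.n:ℚ))) * (H.n : ℚ) := by
      by_contra hnex
      rw [Branch.rootCoeff_eq_zero H (p.2 : ℕ) hnex] at heq
      exact hFne heq
    obtain ⟨i', hi'⟩ := hex'
    refine ⟨i', ?_, ?_⟩
    · have : (i' : ℚ) * (F.n : ℚ) = (i : ℚ) * (H.n : ℚ) := by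
        rw [hi']; push_cast; field_simp
      exact_mod_cast this
    · rw [Branch.rootCoeff_spec H (p.2 : ℕ) hi'] at heq
      intro h0
      rw [h0, zero_mul] at heq
      exact hFne heq
  have B2 : ∀ i', i' * F.n ≤ F.beta k * H.n → H.a i' ≠ 0 →
      ∃ i, i * H.n = i' * F.n ∧ F.a i ≠ 0 := by
    intro i' hi' hai'
    have heq := A0 (i' * F.n) hi'
    have hiq : (i' : ℚ) = (((i' * F.n : ℕ) : ℚ)/((F.n:ℚ)*(H.n:ℚ))) * (H.n : ℚ) := by
      push_cast; field_simp
    rw [Branch.rootCoeff_spec H (p.2 : ℕ) hiq] at heq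
    have hHne : H.a i' * Complex.exp (2 * Real.pi * Complex.I * (p.2 : ℕ) * i' / H.n) ≠ 0 :=
      mul_ne_zero hai' (Complex.exp_ne_zero _)
    have hex' : ∃ i : ℕ, (i : ℚ) = (((i' * F.n : ℕ) : ℚ)/((F.n:ℚ)*(H.n:ℚ))) * (F.n : ℚ) := by
      by_contra hnex
      rw [Branch.rootCoeff_eq_zero F (p.1 : ℕ) hnex] at heq
      exact hHne heq.symm
    obtain ⟨i, hi⟩ := hex'
    refine ⟨i, ?_, ?_⟩
    · have : (i : ℚ) * (H.n : ℚ) = (i' : ℚ) * (F.n : ℚ) := by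
        rw [hi]; push_cast; field_simp
      exact_mod_cast this
    · rw [Branch.rootCoeff_spec F (p.1 : ℕ) hi] at heq
      intro h0
      rw [h0, zero_mul] at heq
      exact hHne heq.symm
  -- transfer the characteristic data
  have hkey := Branch.key F H k hkF B1 B2
  have hv := Branch.vkey F H k hkey
  -- conclude
  intro i hik
  obtain ⟨hbc, hec⟩ := hkey i hik
  have hvc := hv i hik
  have hFe := F.e_pos i
  have hFb := F.beta_pos (le_trans hik hkF)
  have hFv := F.v_pos i (le_trans hik hkF)
  have hHe : 0 < H.e i := H.e_pos i
  have hHb : 0 < H.beta i := H.beta_pos (le_trans hik hkH)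
  have hHv : 0 < H.v i := by
    rcases Nat.eq_zero_or_pos (H.v i) with h0 | h
    · exfalso
      rw [h0, zero_mul] at hvc
      have : 0 < F.v i * H.n := Nat.mul_pos hFv H.npos
      omega
    · exact h
  have r1 : (F.e i : ℚ) / (H.e i : ℚ) = (F.n : ℚ) / (H.n : ℚ) := by
    rw [div_eq_div_iff (by exact_mod_cast hHe.ne') (by exact_mod_cast H.npos.ne')]
    exact_mod_cast hec.trans (mul_comm _ _)
  have r2 : (F.beta i : ℚ) / (H.beta i : ℚ) = (F.n : ℚ) / (H.n : ℚ) := by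
    rw [div_eq_div_iff (by exact_mod_cast hHb.ne') (by exact_mod_cast H.npos.ne')]
    exact_mod_cast hbc.trans (mul_comm _ _)
  have r3 : (F.v i : ℚ) / (H.v i : ℚ) = (F.n : ℚ) / (H.n : ℚ) := by
    rw [div_eq_div_iff (by exact_mod_cast hHv.ne') (by exact_mod_cast H.npos.ne')]
    exact_mod_cast hvc.trans (mul_comm _ _)
  exact ⟨r1.trans r2.symm, r2.trans r3.symm⟩
end
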